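/- arXiv:1310.5612 — 4 statements merged into one kernel-verified Lean document; each statement's English description precedes it below -/
import Mathlib

section
/- For all quaternions e, x ∈ ℍ, the QLMS update term Δ = ½ e x* − ¼ x* e* decomposes as: re(Δ) = ¼ re(e) re(x) − ¾ re(e · Im(x)) and Im(Δ) = ¾ re(x) Im(e) − ¼ Im(e · Im(x)), i.e., the QLMS update has weighting coefficients a = d = ¼ and b = c = ¾ in the generic decomposition re(Δ) = a re(e · re(x)) − b re(e · Im(x)), Im(Δ) = c Im(e · re(x)) − d Im(e · Im(x)). -/
open scoped Quaternion

/-- The vector (imaginary) part of a quaternion: `q` minus its real (scalar) part. -/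
def qIm (q : ℍ[ℝ]) : ℍ[ℝ] := q - (q.re : ℍ[ℝ])

theorem QLMS_update_decomposition (e x : ℍ[ℝ])
    (Δ : ℍ[ℝ])
    (hΔ : Δ = (1 / 2 : ℝ) • (e * star x) - (1 / 4 : ℝ) • (star x * star e)) :
    Δ.re = (1 / 4 : ℝ) * e.re * x.re - (3 / 4 : ℝ) * (e * qIm x).re ∧
    qIm Δ = ((3 / 4 : ℝ) * x.re) • qIm e - (1 / 4 : ℝ) • qIm (e * qIm x) := by
  subst hΔ
  constructor
  · simp [qIm, Quaternion.re_mul, ← Quaternion.coe_inv]; ring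
  · ext <;>
      simp [qIm, Quaternion.re_mul, Quaternion.imI_mul, Quaternion.imJ_mul,
        Quaternion.imK_mul, ← Quaternion.coe_inv] <;> ring
end

section
/- For all quaternions e, x ∈ ℍ, the HR-QLMS update term Δ = ½ e x* − ¼ x e* decomposes as: re(Δ) = ¼ re(e) re(x) − ¼ re(e · Im(x)) and Im(Δ) = ¾ re(x) Im(e) − ¾ Im(e · Im(x)), i.e., the HR-QLMS update has weighting coefficients a = b = ¼ and c = d = ¾ in the generic decomposition re(Δ) = a re(e · re(x)) − b re(e · Im(x)), Im(Δ) = c Im(e · re(x)) − d Im(e · Im(x)). -/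
open scoped Quaternion

theorem HR_QLMS_update_decomposition (e x : ℍ[ℝ])
    (Δ : ℍ[ℝ])
    (hΔ : Δ = (1 / 2 : ℝ) • (e * star x) - (1 / 4 : ℝ) • (x * star e)) :
    Δ.re = (1 / 4 : ℝ) * e.re * x.re - (1 / 4 : ℝ) * (e * qIm x).re ∧
    qIm Δ = ((3 / 4 : ℝ) * x.re) • qIm e - (3 / 4 : ℝ) • qIm (e * qIm x) := by
  subst hΔ
  constructor
  · simp only [qIm, Quaternion.re_sub, Quaternion.re_smul, smul_eq_mul,
      Quaternion.re_mul, Quaternion.re_star, Quaternion.imI_star,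
      Quaternion.imJ_star, Quaternion.imK_star, Quaternion.re_coe,
      Quaternion.imI_coe, Quaternion.imJ_coe, Quaternion.imK_coe,
      Quaternion.imI_sub, Quaternion.imJ_sub, Quaternion.imK_sub]
    ring
  · ext <;>
      simp only [qIm, Quaternion.re_sub, Quaternion.imI_sub, Quaternion.imJ_sub,
        Quaternion.imK_sub, Quaternion.re_smul, Quaternion.imI_smul,
        Quaternion.imJ_smul, Quaternion.imK_smul, smul_eq_mul,
        Quaternion.re_mul, Quaternion.imI_mul, Quaternion.imJ_mul,
        Quaternion.imK_mul, Quaternion.re_star, Quaternion.imI_star,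
        Quaternion.imJ_star, Quaternion.imK_star, Quaternion.re_coe,
        Quaternion.imI_coe, Quaternion.imJ_coe, Quaternion.imK_coe] <;>
      ring
end

section
/- Let N ∈ ℕ, r, x : Fin N → ℍ with x ≠ 0, e ∈ ℍ, μ ∈ ℝ. Define r'(m) = r(m) − μ x(m) e*, e_a = Σ_m (r(m))* x(m), e_p = Σ_m (r'(m))* x(m), and S = Σ_m ‖x(m)‖². Then the energy conservation relation holds: Σ_m ‖r'(m)‖² + ‖e_a‖² / S = Σ_m ‖r(m)‖² + ‖e_p‖² / S. -/
open scoped Quaternion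

private lemma re_triple (a b c : ℍ[ℝ]) :
    (a * (c * star b)).re = (star a * b * star c).re := by
  simp only [Quaternion.re_mul, Quaternion.imI_mul, Quaternion.imJ_mul, Quaternion.imK_mul,
    Quaternion.re_star, Quaternion.imI_star, Quaternion.imJ_star, Quaternion.imK_star]
  ring

theorem energy_conservation_relation (N : ℕ) (r x : Fin N → ℍ[ℝ]) (e : ℍ[ℝ]) (μ : ℝ)
    (hx : x ≠ 0)
    (r' : Fin N → ℍ[ℝ]) (hr' : ∀ m, r' m = r m - μ • (x m * star e))
    (ea ep : ℍ[ℝ]) (S : ℝ)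
    (hea : ea = ∑ m, star (r m) * x m)
    (hep : ep = ∑ m, star (r' m) * x m)
    (hS : S = ∑ m, ‖x m‖ ^ 2) :
    (∑ m, ‖r' m‖ ^ 2) + ‖ea‖ ^ 2 / S = (∑ m, ‖r m‖ ^ 2) + ‖ep‖ ^ 2 / S := by
  obtain ⟨m0, hm0⟩ := Function.ne_iff.mp hx
  have hm0' : x m0 ≠ 0 := by simpa using hm0
  have hSpos : 0 < S := by
    rw [hS]
    exact Finset.sum_pos' (fun i _ => by positivity)
      ⟨m0, Finset.mem_univ _, pow_pos (norm_pos_iff.mpr hm0') 2⟩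
  have hnormSq : ∀ q : ℍ[ℝ], (Quaternion.normSq q : ℝ) = ‖q‖ ^ 2 := by
    intro q; rw [Quaternion.normSq_eq_norm_mul_self, sq]
  -- ep = ea - (μ * S) • e
  have hterm : ∀ m, star (r' m) * x m = star (r m) * x m - (μ * ‖x m‖ ^ 2) • e := by
    intro m
    rw [hr', star_sub, Quaternion.star_smul, star_mul, star_star, sub_mul, smul_mul_assoc,
      mul_assoc, Quaternion.star_mul_self, Quaternion.mul_coe_eq_smul, smul_smul, hnormSq]
  have hep2 : ep = ea - (μ * S) • e := by
    rw [hep, hea, hS]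
    rw [Finset.sum_congr rfl (fun m _ => hterm m), Finset.sum_sub_distrib,
      ← Finset.sum_smul, ← Finset.mul_sum]
  -- inner identity
  have hkey : ∀ m, (inner ℝ (r m) (x m * star e) : ℝ) = (star (r m) * x m * star e).re := by
    intro m
    rw [Quaternion.inner_def, star_mul, star_star, re_triple]
  -- pointwise norm expansion
  have hn' : ∀ m, ‖r' m‖ ^ 2 =
      ‖r m‖ ^ 2 - 2 * μ * (star (r m) * x m * star e).re + μ ^ 2 * (‖x m‖ ^ 2 * ‖e‖ ^ 2) := by
    intro m
    rw [hr', norm_sub_sq_real, real_inner_smul_right, hkey, norm_smul, norm_mul,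
      Quaternion.norm_star, Real.norm_eq_abs, mul_pow, mul_pow, sq_abs]
    ring
  have hsum' : (∑ m, ‖r' m‖ ^ 2) =
      (∑ m, ‖r m‖ ^ 2) - 2 * μ * (∑ m, (star (r m) * x m * star e).re) + μ ^ 2 * (S * ‖e‖ ^ 2) := by
    rw [Finset.sum_congr rfl (fun m _ => hn' m), Finset.sum_add_distrib, Finset.sum_sub_distrib,
      ← Finset.mul_sum, ← Finset.mul_sum, hS, ← Finset.sum_mul, Finset.mul_sum]
  -- inner ea e as sum
  have hinner_ea : (inner ℝ ea e : ℝ) = ∑ m, (star (r m) * x m * star e).re := by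
    rw [Quaternion.inner_def, hea, Finset.sum_mul]
    exact map_sum (QuaternionAlgebra.reₗ (R := ℝ) (-1) 0 (-1)) _ _
  have hep_norm : ‖ep‖ ^ 2 =
      ‖ea‖ ^ 2 - 2 * (μ * S) * (∑ m, (star (r m) * x m * star e).re) + (μ * S) ^ 2 * ‖e‖ ^ 2 := by
    rw [hep2, norm_sub_sq_real, real_inner_smul_right, hinner_ea, norm_smul, Real.norm_eq_abs,
      mul_pow, sq_abs]
    ring
  rw [hsum', hep_norm]
  field_simp
  ring
end

section
/- For all quaternions e, x ∈ ℍ: x* + (x^i)* + (x^j)* + (x^k)* = 4 re(x) (a real quaternion), and consequently the real parts of the four WL-IQLMS channel update terms sum according to ½ ( re(e x*) + re(e (x^i)*) + re(e (x^j)*) + re(e (x^k)*) ) = 2 re(e) re(x), establishing the duality between the WL-IQLMS update and the corresponding four-channel real LMS update. -/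
open scoped Quaternion

/-- The imaginary unit `i` of the real quaternions. -/
def qi : ℍ[ℝ] := ⟨0, 1, 0, 0⟩
/-- The imaginary unit `j` of the real quaternions. -/
def qj : ℍ[ℝ] := ⟨0, 0, 1, 0⟩
/-- The imaginary unit `k` of the real quaternions. -/
def qk : ℍ[ℝ] := ⟨0, 0, 0, 1⟩

/-- The quaternion involution `q ↦ -η * q * η`. -/
noncomputable def qinv (η q : ℍ[ℝ]) : ℍ[ℝ] := -η * q * η

theorem WL_IQLMS_four_channel_real_LMS_duality (e x : ℍ[ℝ]) :
    star x + star (qinv qi x) + star (qinv qj x) + star (qinv qk x)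
      = ((4 * x.re : ℝ) : ℍ[ℝ]) ∧
    (1 / 2 : ℝ) * ((e * star x).re + (e * star (qinv qi x)).re +
        (e * star (qinv qj x)).re + (e * star (qinv qk x)).re)
      = 2 * e.re * x.re := by
  have h : star x + star (qinv qi x) + star (qinv qj x) + star (qinv qk x)
      = ((4 * x.re : ℝ) : ℍ[ℝ]) := by
    ext <;>
      simp [qinv, Quaternion.re_mul, Quaternion.imI_mul,
        Quaternion.imJ_mul, Quaternion.imK_mul] <;> simp [qi, qj, qk] <;> ring
  refine ⟨h, ?_⟩
  have h2 : (e * star x).re + (e * star (qinv qi x)).re +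
      (e * star (qinv qj x)).re + (e * star (qinv qk x)).re
      = (e * (star x + star (qinv qi x) + star (qinv qj x) + star (qinv qk x))).re := by
    simp [mul_add]
  rw [h2, h]
  simp [Quaternion.re_mul]
  ring
end
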